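/- Let M be a finite-dimensional second-countable Hausdorff smooth manifold, A a finite index set, and (V'_α)_{α∈A} an open cover of M; for each α let U_α be a set and π_α : M → U_α a map. Call a function f : M → ℝ admissible if for every α and all x, y ∈ V'_α with π_α(x) = π_α(y) one has f(x) = f(y). Suppose I is a linear operator taking smooth real-valued functions on M to smooth real-valued functions on M such that: (1) I(f) is admissible for every smooth f; (2) I(f) = f whenever f is constant; (3) if f ≥ 0 everywhere then I(f) ≥ 0 everywhere; and (4) if the support of f is contained in V'_α for some α, then the support of I(f) is contained in V'_α. Then there exists a family (ρ_α)_{α∈A} of smooth functions ρ_α : M → ℝ such that each ρ_α is admissible, the support of ρ_α is contained in V'_α for each α, and Σ_{α∈A} ρ_α² = 1 on M. -/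

import Mathlib

open scoped Manifold
open Set

/-- Existence of an admissible partition of unity: given a finite open cover
`{V'_α}` of a smooth manifold `M`, fibration maps `π_α`, and an averaging
operation `I` on smooth functions, there is a family of smooth admissible
functions `ρ_α` supported in `V'_α` with `∑ ρ_α² = 1`. -/
theorem exists_admissible_partition_of_unity
    {n : ℕ} {M : Type*} [TopologicalSpace M]
    [ChartedSpace (EuclideanSpace ℝ (Fin n)) M] [IsManifold (𝓡 n) (⊤ : ℕ∞) M]
    [T2Space M] [SecondCountableTopology M]
    {A : Type*} [Fintype A]
    (V' : A → Set M) (hopen : ∀ α, IsOpen (V' α)) (hcover : (⋃ α, V' α) = univ)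
    {U : A → Type*} (π : (α : A) → M → U α)
    (I : (M → ℝ) → (M → ℝ))
    -- `I` is linear on smooth functions
    (hIadd : ∀ f g : M → ℝ, ContMDiff (𝓡 n) 𝓘(ℝ) (⊤ : ℕ∞) f → ContMDiff (𝓡 n) 𝓘(ℝ) (⊤ : ℕ∞) g →
      I (f + g) = I f + I g)
    (hIsmul : ∀ (c : ℝ) (f : M → ℝ), ContMDiff (𝓡 n) 𝓘(ℝ) (⊤ : ℕ∞) f → I (c • f) = c • I f)
    -- `I` takes smooth functions to smooth functions
    (hIsmooth : ∀ f : M → ℝ, ContMDiff (𝓡 n) 𝓘(ℝ) (⊤ : ℕ∞) f → ContMDiff (𝓡 n) 𝓘(ℝ) (⊤ : ℕ∞) (I f))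
    -- (1) `I f` is admissible
    (hIadm : ∀ f : M → ℝ, ContMDiff (𝓡 n) 𝓘(ℝ) (⊤ : ℕ∞) f →
      ∀ α, ∀ x ∈ V' α, ∀ y ∈ V' α, π α x = π α y → I f x = I f y)
    -- (2) `I` fixes constants
    (hIconst : ∀ c : ℝ, I (fun _ => c) = fun _ => c)
    -- (3) `I` preserves nonnegativity
    (hInonneg : ∀ f : M → ℝ, ContMDiff (𝓡 n) 𝓘(ℝ) (⊤ : ℕ∞) f → (∀ x, 0 ≤ f x) →
      ∀ x, 0 ≤ I f x)
    -- (4) `I` preserves supports inside the `V'_α`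
    (hIsupp : ∀ (f : M → ℝ) (α : A), ContMDiff (𝓡 n) 𝓘(ℝ) (⊤ : ℕ∞) f →
      tsupport f ⊆ V' α → tsupport (I f) ⊆ V' α) :
    ∃ ρ : A → M → ℝ,
      (∀ α, ContMDiff (𝓡 n) 𝓘(ℝ) (⊤ : ℕ∞) (ρ α)) ∧
      (∀ α β, ∀ x ∈ V' β, ∀ y ∈ V' β, π β x = π β y → ρ α x = ρ α y) ∧
      (∀ α, tsupport (ρ α) ⊆ V' α) ∧
      (∀ x, ∑ α, (ρ α x) ^ 2 = 1) := by
  classical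
  haveI : LocallyCompactSpace M :=
    ChartedSpace.locallyCompactSpace (EuclideanSpace ℝ (Fin n)) M
  -- obtain a smooth partition of unity subordinate to V'
  obtain ⟨φ, hφsub⟩ := SmoothPartitionOfUnity.exists_isSubordinate (𝓡 n) isClosed_univ V'
    hopen (by rw [hcover])
  -- the averaged functions
  set g : A → M → ℝ := fun α => I (φ α) with hg
  have hφsm : ∀ α, ContMDiff (𝓡 n) 𝓘(ℝ) (⊤ : ℕ∞) (φ α) := fun α => (φ α).contMDiff
  have hgsm : ∀ α, ContMDiff (𝓡 n) 𝓘(ℝ) (⊤ : ℕ∞) (g α) := fun α => hIsmooth _ (hφsm α)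
  have hgnn : ∀ α x, 0 ≤ g α x := fun α x => hInonneg _ (hφsm α) (fun y => φ.nonneg α y) x
  -- I commutes with finite sums
  have hsum : ∀ (s : Finset A), I (∑ α ∈ s, (φ α : M → ℝ)) = ∑ α ∈ s, g α := by
    intro s
    induction s using Finset.induction with
    | empty =>
      simp only [Finset.sum_empty]; exact hIconst 0
    | insert a s hnotmem ih =>
      have hsm : ContMDiff (𝓡 n) 𝓘(ℝ) (⊤ : ℕ∞) (∑ α ∈ s, (⇑(φ α) : M → ℝ)) := by
        have h : ContMDiff (𝓡 n) 𝓘(ℝ) (⊤ : ℕ∞) (fun x => ∑ α ∈ s, φ α x) :=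
          ContMDiff.sum fun i _ => hφsm i
        have he : (∑ α ∈ s, (⇑(φ α) : M → ℝ)) = fun x => ∑ α ∈ s, φ α x := by
          ext x; simp
        rw [he]; exact h
      rw [Finset.sum_insert hnotmem, Finset.sum_insert hnotmem,
        hIadd _ _ (hφsm a) hsm, ih]
  have hsum1 : ∀ x, ∑ α, g α x = 1 := by
    intro x
    have h1 : (∑ α, (φ α : M → ℝ)) = fun _ => (1 : ℝ) := by
      funext y
      have := φ.sum_eq_one (mem_univ y)
      rw [finsum_eq_sum_of_fintype] at this
      simpa using this
    have := hsum Finset.univ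
    rw [h1, hIconst 1] at this
    calc (∑ α, g α x) = (∑ α, g α) x := by simp
    _ = 1 := by rw [← this]
  -- the denominator
  set S : M → ℝ := fun x => ∑ α, (g α x) ^ 2 with hS
  have hSpos : ∀ x, 0 < S x := by
    intro x
    have : ∃ α, 0 < g α x := by
      by_contra h
      push_neg at h
      have : ∀ α, g α x = 0 := fun α => le_antisymm (h α) (hgnn α x)
      have h1 := hsum1 x
      simp [this] at h1
    obtain ⟨α, hα⟩ := this
    calc (0:ℝ) < (g α x) ^ 2 := by positivity
    _ ≤ S x := Finset.single_le_sum (f := fun β => (g β x) ^ 2)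
        (fun β _ => sq_nonneg _) (Finset.mem_univ α)
  have hSsm : ContMDiff (𝓡 n) 𝓘(ℝ) (⊤ : ℕ∞) S := by
    apply ContMDiff.sum
    intro α _
    simp only [pow_two]
    exact (hgsm α).mul (hgsm α)
  have hsqrtsm : ContMDiff (𝓡 n) 𝓘(ℝ) (⊤ : ℕ∞) (fun x => Real.sqrt (S x)) := by
    intro x
    exact ((Real.contDiffAt_sqrt (hSpos x).ne').contMDiffAt.comp x (hSsm x)).contMDiffWithinAt
  have hsqrtpos : ∀ x, 0 < Real.sqrt (S x) := fun x => Real.sqrt_pos.2 (hSpos x)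
  -- the normalized family
  refine ⟨fun α x => g α x / Real.sqrt (S x), ?_, ?_, ?_, ?_⟩
  · intro α
    exact (hgsm α).div₀ hsqrtsm (fun x => (hsqrtpos x).ne')
  · intro α β x hx y hy hπ
    show g α x / Real.sqrt (S x) = g α y / Real.sqrt (S y)
    have hgadm : ∀ γ, g γ x = g γ y := fun γ => hIadm _ (hφsm γ) β x hx y hy hπ
    have hSxy : S x = S y := by
      simp only [hS]
      exact Finset.sum_congr rfl fun γ _ => by rw [hgadm γ]
    rw [hgadm α, hSxy]
  · intro α
    have hsub : tsupport (g α) ⊆ V' α := hIsupp _ α (hφsm α) (hφsub α)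
    refine (closure_mono ?_).trans hsub
    intro x hx
    simp only [Function.mem_support] at hx ⊢
    intro h
    exact hx (by rw [h, zero_div])
  · intro x
    have : ∀ α, (g α x / Real.sqrt (S x)) ^ 2 = (g α x) ^ 2 / S x := by
      intro α
      rw [div_pow, Real.sq_sqrt (hSpos x).le]
    simp only [this, ← Finset.sum_div]
    exact div_self (hSpos x).ne'
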